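/- Define f(u,v) = (√2/2)·(sinh(v-u), -sin(u+v), cos(u+v), -cosh(v-u)) and ν(u,v) = (√2/2)·(sinh(v-u), sin(u+v), -cos(u+v), -cosh(v-u)) as maps ℝ² → ℝ⁴ with the Minkowski inner product ⟨u,v⟩ = -u₁v₁ + u₂v₂ + u₃v₃ + u₄v₄. Then for all (u,v): ⟨f,f⟩ = 1, ⟨ν,ν⟩ = 1, ⟨f,ν⟩ = 0, ⟨f_u,ν⟩ = ⟨f_v,ν⟩ = 0, ⟨f_u,f_u⟩ = ⟨f_v,f_v⟩ = 0, ⟨f_u,f_v⟩ = 1, and ⟨f_{uv},ν⟩ = 0. -/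

import Mathlib

/-- The Minkowski inner product on ℝ⁴, signature (-,+,+,+). -/
def mink (u v : Fin 4 → ℝ) : ℝ :=
  -(u 0 * v 0) + u 1 * v 1 + u 2 * v 2 + u 3 * v 3

noncomputable def f (p : ℝ × ℝ) : Fin 4 → ℝ :=
  (Real.sqrt 2 / 2) •
    ![Real.sinh (p.2 - p.1), -Real.sin (p.1 + p.2), Real.cos (p.1 + p.2),
      -Real.cosh (p.2 - p.1)]

noncomputable def ν (p : ℝ × ℝ) : Fin 4 → ℝ :=
  (Real.sqrt 2 / 2) •
    ![Real.sinh (p.2 - p.1), Real.sin (p.1 + p.2), -Real.cos (p.1 + p.2),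
      -Real.cosh (p.2 - p.1)]

noncomputable def fu (p : ℝ × ℝ) : Fin 4 → ℝ := fderiv ℝ f p (1, 0)
noncomputable def fv (p : ℝ × ℝ) : Fin 4 → ℝ := fderiv ℝ f p (0, 1)
noncomputable def fuv (p : ℝ × ℝ) : Fin 4 → ℝ := fderiv ℝ fu p (0, 1)

noncomputable def pd (a b : ℝ) : ℝ × ℝ →L[ℝ] ℝ :=
  a • (ContinuousLinearMap.fst ℝ ℝ ℝ) + b • (ContinuousLinearMap.snd ℝ ℝ ℝ)

@[simp] lemma pd_apply (a b : ℝ) (x : ℝ × ℝ) : pd a b x = a * x.1 + b * x.2 := by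
  simp [pd, smul_eq_mul]

lemma hsub (p : ℝ × ℝ) : HasFDerivAt (fun x : ℝ × ℝ => x.2 - x.1) (pd (-1) 1) p := by
  have h := (hasFDerivAt_snd (𝕜 := ℝ) (E := ℝ) (F := ℝ) (p := p)).sub
    (hasFDerivAt_fst (𝕜 := ℝ) (E := ℝ) (F := ℝ) (p := p))
  refine h.congr_fderiv ?_
  ext <;> simp [pd]

lemma hadd (p : ℝ × ℝ) : HasFDerivAt (fun x : ℝ × ℝ => x.1 + x.2) (pd 1 1) p := by
  have h := (hasFDerivAt_fst (𝕜 := ℝ) (E := ℝ) (F := ℝ) (p := p)).add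
    (hasFDerivAt_snd (𝕜 := ℝ) (E := ℝ) (F := ℝ) (p := p))
  refine h.congr_fderiv ?_
  ext <;> simp [pd]

noncomputable def c : ℝ := Real.sqrt 2 / 2

/-- the derivative of `f` -/
noncomputable def Lf (p : ℝ × ℝ) : ℝ × ℝ →L[ℝ] (Fin 4 → ℝ) :=
  ContinuousLinearMap.pi
    ![pd (-(c * Real.cosh (p.2 - p.1))) (c * Real.cosh (p.2 - p.1)),
      pd (-(c * Real.cos (p.1 + p.2))) (-(c * Real.cos (p.1 + p.2))),
      pd (-(c * Real.sin (p.1 + p.2))) (-(c * Real.sin (p.1 + p.2))),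
      pd (c * Real.sinh (p.2 - p.1)) (-(c * Real.sinh (p.2 - p.1)))]

lemma hf (p : ℝ × ℝ) : HasFDerivAt f (Lf p) p := by
  apply hasFDerivAt_pi'.2
  intro i
  fin_cases i
  · refine ((((Real.hasDerivAt_sinh (p.2 - p.1)).comp_hasFDerivAt p (hsub p)).const_mul c).congr_fderiv ?_).congr_of_eventuallyEq
      (Filter.Eventually.of_forall fun x => ?_)
    · apply ContinuousLinearMap.ext; intro x
      simp [Lf, pd, smul_eq_mul]; ring_nf
    · simp [f, c]
  · refine (((((Real.hasDerivAt_sin (p.1 + p.2)).comp_hasFDerivAt p (hadd p)).const_mul c).neg).congr_fderiv ?_).congr_of_eventuallyEq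
      (Filter.Eventually.of_forall fun x => ?_)
    · apply ContinuousLinearMap.ext; intro x
      simp [Lf, pd, smul_eq_mul]; ring_nf
    · simp [f, c]
  · refine ((((Real.hasDerivAt_cos (p.1 + p.2)).comp_hasFDerivAt p (hadd p)).const_mul c).congr_fderiv ?_).congr_of_eventuallyEq
      (Filter.Eventually.of_forall fun x => ?_)
    · apply ContinuousLinearMap.ext; intro x
      simp [Lf, pd, smul_eq_mul]; ring_nf
    · simp [f, c]
  · refine (((((Real.hasDerivAt_cosh (p.2 - p.1)).comp_hasFDerivAt p (hsub p)).const_mul c).neg).congr_fderiv ?_).congr_of_eventuallyEq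
      (Filter.Eventually.of_forall fun x => ?_)
    · apply ContinuousLinearMap.ext; intro x
      simp [Lf, pd, smul_eq_mul]; ring_nf
    · simp [f, c]

lemma fu_eq (p : ℝ × ℝ) :
    fu p = ![-(c * Real.cosh (p.2 - p.1)), -(c * Real.cos (p.1 + p.2)),
      -(c * Real.sin (p.1 + p.2)), c * Real.sinh (p.2 - p.1)] := by
  have h : fu p = Lf p (1, 0) := by rw [fu, (hf p).fderiv]
  rw [h]
  funext i
  fin_cases i <;> simp [Lf, pd, smul_eq_mul]

lemma fv_eq (p : ℝ × ℝ) :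
    fv p = ![c * Real.cosh (p.2 - p.1), -(c * Real.cos (p.1 + p.2)),
      -(c * Real.sin (p.1 + p.2)), -(c * Real.sinh (p.2 - p.1))] := by
  have h : fv p = Lf p (0, 1) := by rw [fv, (hf p).fderiv]
  rw [h]
  funext i
  fin_cases i <;> simp [Lf, pd, smul_eq_mul]

/-- the derivative of `fu` -/
noncomputable def Lfu (p : ℝ × ℝ) : ℝ × ℝ →L[ℝ] (Fin 4 → ℝ) :=
  ContinuousLinearMap.pi
    ![pd (c * Real.sinh (p.2 - p.1)) (-(c * Real.sinh (p.2 - p.1))),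
      pd (c * Real.sin (p.1 + p.2)) (c * Real.sin (p.1 + p.2)),
      pd (-(c * Real.cos (p.1 + p.2))) (-(c * Real.cos (p.1 + p.2))),
      pd (-(c * Real.cosh (p.2 - p.1))) (c * Real.cosh (p.2 - p.1))]

lemma hfu (p : ℝ × ℝ) : HasFDerivAt fu (Lfu p) p := by
  have hfun : fu = fun q : ℝ × ℝ =>
      (![-(c * Real.cosh (q.2 - q.1)), -(c * Real.cos (q.1 + q.2)),
        -(c * Real.sin (q.1 + q.2)), c * Real.sinh (q.2 - q.1)] : Fin 4 → ℝ) := by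
    funext q; exact fu_eq q
  rw [hfun]
  apply hasFDerivAt_pi'.2
  intro i
  fin_cases i
  · refine (((((Real.hasDerivAt_cosh (p.2 - p.1)).comp_hasFDerivAt p (hsub p)).const_mul c).neg).congr_fderiv ?_).congr_of_eventuallyEq
      (Filter.Eventually.of_forall fun x => ?_)
    · apply ContinuousLinearMap.ext; intro x
      simp [Lfu, pd, smul_eq_mul]; ring_nf
    · simp
  · refine (((((Real.hasDerivAt_cos (p.1 + p.2)).comp_hasFDerivAt p (hadd p)).const_mul c).neg).congr_fderiv ?_).congr_of_eventuallyEq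
      (Filter.Eventually.of_forall fun x => ?_)
    · apply ContinuousLinearMap.ext; intro x
      simp [Lfu, pd, smul_eq_mul]; ring_nf
    · simp
  · refine (((((Real.hasDerivAt_sin (p.1 + p.2)).comp_hasFDerivAt p (hadd p)).const_mul c).neg).congr_fderiv ?_).congr_of_eventuallyEq
      (Filter.Eventually.of_forall fun x => ?_)
    · apply ContinuousLinearMap.ext; intro x
      simp [Lfu, pd, smul_eq_mul]; ring_nf
    · simp
  · refine ((((Real.hasDerivAt_sinh (p.2 - p.1)).comp_hasFDerivAt p (hsub p)).const_mul c).congr_fderiv ?_).congr_of_eventuallyEq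
      (Filter.Eventually.of_forall fun x => ?_)
    · apply ContinuousLinearMap.ext; intro x
      simp [Lfu, pd, smul_eq_mul]; ring_nf
    · simp

lemma fuv_eq (p : ℝ × ℝ) :
    fuv p = ![-(c * Real.sinh (p.2 - p.1)), c * Real.sin (p.1 + p.2),
      -(c * Real.cos (p.1 + p.2)), c * Real.cosh (p.2 - p.1)] := by
  have h : fuv p = Lfu p (0, 1) := by rw [fuv, (hfu p).fderiv]
  rw [h]
  funext i
  fin_cases i <;> simp [Lfu, pd, smul_eq_mul]

theorem stmt_15 (p : ℝ × ℝ) :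
    mink (f p) (f p) = 1 ∧ mink (ν p) (ν p) = 1 ∧ mink (f p) (ν p) = 0 ∧
    mink (fu p) (ν p) = 0 ∧ mink (fv p) (ν p) = 0 ∧
    mink (fu p) (fu p) = 0 ∧ mink (fv p) (fv p) = 0 ∧
    mink (fu p) (fv p) = 1 ∧ mink (fuv p) (ν p) = 0 := by
  have h2 : Real.sqrt 2 * Real.sqrt 2 = 2 := Real.mul_self_sqrt (by norm_num)
  have hsc := Real.sin_sq_add_cos_sq (p.1 + p.2)
  have hch := Real.cosh_sq_sub_sinh_sq (p.2 - p.1)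
  refine ⟨?_, ?_, ?_, ?_, ?_, ?_, ?_, ?_, ?_⟩ <;>
    simp [mink, f, ν, fu_eq, fv_eq, fuv_eq, c, smul_eq_mul] <;> nlinarith [h2, hsc, hch]
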